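/- Let R be a curvature-like tensor on ℝ^N whose bivector square vanishes, R^{(2)}_{abcd} = 0, and whose Ricci contraction vanishes, Ric(R) = 0. Suppose there is a null frame in which all boost-weight +2 components vanish: R_{0i0j} = R(ℓ,m_i,ℓ,m_j) = 0 for all spatial i, j. Then all boost-weight +1 components vanish as well: R_{0i01} = 0 and R_{0ijk} = 0 for all spatial i, j, k; in particular the boost order of R along ℓ is at most 0. -/

import Mathlib

open Matrix

/-! Null-frame formalism: we work with the components of tensors with respect to a
null frame `e_0 = ℓ, e_1 = n, e_2 = m_2, …, e_{N−1} = m_{N−1}` for the Minkowski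
form `η` on `ℝ^N` (so `η(ℓ,n) = 1`, `η(m_i,m_j) = δ_{ij}`, all other frame products
vanish).  `ηnf N` is the matrix of frame components `η_{AB}`, and `ηup N = (ηnf N)⁻¹`
is the matrix of the inverse-metric components `η^{AB}` used to raise indices.
Spatial indices are those `i : Fin N` with `2 ≤ i`. -/

/-- Frame components `η_{AB}` of the Minkowski form in a null frame. -/
def ηnf (N : ℕ) : Matrix (Fin N) (Fin N) ℝ :=
  Matrix.of fun A B =>
    if ((A : ℕ) = 0 ∧ (B : ℕ) = 1) ∨ ((A : ℕ) = 1 ∧ (B : ℕ) = 0) then 1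
    else if A = B ∧ 2 ≤ (A : ℕ) then 1 else 0

/-- Components `η^{AB}` of the inverse metric in a null frame. -/
noncomputable def ηup (N : ℕ) : Matrix (Fin N) (Fin N) ℝ := (ηnf N)⁻¹

/-- The boost weight of a null-frame index: `+1` for the index `0` (the `ℓ` slot),
`−1` for the index `1` (the `n` slot), `0` for spatial indices. -/
def bw {N : ℕ} (A : Fin N) : ℤ :=
  if (A : ℕ) = 0 then 1 else if (A : ℕ) = 1 then -1 else 0

/-- A curvature-like tensor: a 4-linear form (given here by its null-frame components)
with `R_{abcd} = −R_{bacd} = R_{cdab}`. -/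
def CurvLike {N : ℕ} (R : Fin N → Fin N → Fin N → Fin N → ℝ) : Prop :=
  (∀ a b c d, R a b c d = -R b a c d) ∧ (∀ a b c d, R a b c d = R c d a b)

/-- The bivector square of a curvature-like tensor:
`R⁽²⁾_{abcd} = (1/2) R_{abef} η^{eg} η^{fh} R_{ghcd}`. -/
noncomputable def bivSq (N : ℕ) (R : Fin N → Fin N → Fin N → Fin N → ℝ) :
    Fin N → Fin N → Fin N → Fin N → ℝ :=
  fun a b c d =>
    (1 / 2 : ℝ) * ∑ e, ∑ f, ∑ g, ∑ h,
      R a b e f * ηup N e g * ηup N f h * R g h c d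

/-- The Ricci contraction `Ric_{ab} = η^{cd} R_{acbd}` of a curvature-like tensor. -/
noncomputable def ricci (N : ℕ) (R : Fin N → Fin N → Fin N → Fin N → ℝ) :
    Fin N → Fin N → ℝ :=
  fun a b => ∑ c, ∑ d, ηup N c d * R a c b d

section Aux
variable {N : ℕ}

def swp (hN : 2 ≤ N) : Fin N → Fin N := fun a =>
  if (a : ℕ) = 0 then ⟨1, Nat.lt_of_lt_of_le (by decide) hN⟩ else if (a : ℕ) = 1 then ⟨0, Nat.lt_of_lt_of_le (by decide) hN⟩ else a

lemma swp_invol (hN : 2 ≤ N) (a : Fin N) : swp hN (swp hN a) = a := by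
  unfold swp
  rcases a with ⟨a, ha⟩
  by_cases h0 : a = 0 <;> by_cases h1 : a = 1 <;> simp_all

lemma swp_val (hN : 2 ≤ N) (A : Fin N) :
    ((swp hN A : Fin N) : ℕ) = if (A:ℕ) = 0 then 1 else if (A:ℕ) = 1 then 0 else (A:ℕ) := by
  unfold swp; rw [apply_ite Fin.val, apply_ite Fin.val]

lemma ηnf_apply (hN : 2 ≤ N) (A B : Fin N) :
    ηnf N A B = if B = swp hN A then 1 else 0 := by
  have h : (if B = swp hN A then (1:ℝ) else 0)
      = if (B:ℕ) = ((swp hN A : Fin N):ℕ) then 1 else 0 := by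
    simp [Fin.ext_iff]
  rw [h, swp_val]
  unfold ηnf
  simp only [Matrix.of_apply, Fin.ext_iff]
  split_ifs <;> first | rfl | omega

lemma ηnf_mul_self (hN : 2 ≤ N) : ηnf N * ηnf N = 1 := by
  ext A B
  rw [Matrix.mul_apply]
  simp only [ηnf_apply hN, boole_mul, Finset.sum_ite_eq', Finset.mem_univ, if_true,
    swp_invol hN, Matrix.one_apply]
  by_cases h : A = B <;> simp [h, eq_comm]

lemma ηup_eq (hN : 2 ≤ N) : ηup N = ηnf N :=
  Matrix.inv_eq_right_inv (ηnf_mul_self hN)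

lemma contract (hN : 2 ≤ N) (e : Fin N) (g : Fin N → ℝ) :
    ∑ x, ηup N e x * g x = g (swp hN e) := by
  simp [ηup_eq hN, ηnf_apply hN, boole_mul, Finset.sum_ite_eq']

def Sp (N : ℕ) : Finset (Fin N) := Finset.univ.filter (fun x => 2 ≤ (x : ℕ))

lemma mem_Sp {N : ℕ} {x : Fin N} : x ∈ Sp N ↔ 2 ≤ (x : ℕ) := by simp [Sp]

lemma swp_z0 {N : ℕ} (hN : 2 ≤ N) : swp hN ⟨0, Nat.lt_of_lt_of_le (by decide) hN⟩ = ⟨1, Nat.lt_of_lt_of_le (by decide) hN⟩ := by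
  simp [swp]

lemma swp_z1 {N : ℕ} (hN : 2 ≤ N) : swp hN ⟨1, Nat.lt_of_lt_of_le (by decide) hN⟩ = ⟨0, Nat.lt_of_lt_of_le (by decide) hN⟩ := by
  simp [swp]

lemma swp_sp {N : ℕ} (hN : 2 ≤ N) {x : Fin N} (hx : 2 ≤ (x : ℕ)) : swp hN x = x := by
  unfold swp; split_ifs <;> omega

lemma sum_split {N : ℕ} (hN : 2 ≤ N) (g : Fin N → ℝ) :
    ∑ x, g x = g ⟨0, Nat.lt_of_lt_of_le (by decide) hN⟩ + g ⟨1, Nat.lt_of_lt_of_le (by decide) hN⟩ + ∑ x ∈ Sp N, g x := by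
  have h : (Finset.univ : Finset (Fin N))
      = insert ⟨0, Nat.lt_of_lt_of_le (by decide) hN⟩ (insert ⟨1, Nat.lt_of_lt_of_le (by decide) hN⟩ (Sp N)) := by
    ext x; simp [Sp, Fin.ext_iff]; omega
  rw [h, Finset.sum_insert, Finset.sum_insert, add_assoc]
  · simp [Sp, Fin.ext_iff]
  · simp [Sp, Fin.ext_iff]

lemma bivSq_eval {N : ℕ} (hN : 2 ≤ N) (R : Fin N → Fin N → Fin N → Fin N → ℝ)
    (a b c d : Fin N) :
    bivSq N R a b c d
      = (1/2) * ∑ e, ∑ f, R a b e f * R (swp hN e) (swp hN f) c d := by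
  unfold bivSq
  congr 1
  refine Finset.sum_congr rfl fun e _ => Finset.sum_congr rfl fun f _ => ?_
  calc ∑ g, ∑ h, R a b e f * ηup N e g * ηup N f h * R g h c d
      = ∑ g, ηup N e g * ∑ h, ηup N f h * (R a b e f * R g h c d) := by
        refine Finset.sum_congr rfl fun g _ => ?_
        rw [Finset.mul_sum]
        exact Finset.sum_congr rfl fun h _ => by ring
    _ = ∑ g, ηup N e g * (R a b e f * R g (swp hN f) c d) := by
        refine Finset.sum_congr rfl fun g _ => ?_
        rw [contract hN f]
    _ = R a b e f * R (swp hN e) (swp hN f) c d := contract hN e _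

lemma ricci_eval {N : ℕ} (hN : 2 ≤ N) (R : Fin N → Fin N → Fin N → Fin N → ℝ)
    (a b : Fin N) :
    ricci N R a b = ∑ c, R a c b (swp hN c) := by
  unfold ricci
  exact Finset.sum_congr rfl fun c _ => contract hN c _


lemma algebra_key {ι : Type*} [DecidableEq ι] (S : Finset ι) (v : ι → ℝ) (A : ι → ι → ι → ℝ)
    (hanti : ∀ i k l, A i k l = -A i l k)
    (hE1 : ∀ i ∈ S, ∀ j ∈ S, ∑ k ∈ S, ∑ l ∈ S, A i k l * A j k l = 2 * (v i * v j))
    (hE2 : ∀ i ∈ S, ∑ k ∈ S, A k i k = v i) :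
    (∀ i ∈ S, v i = 0) ∧ (∀ i ∈ S, ∀ k ∈ S, ∀ l ∈ S, A i k l = 0) := by
  set c : ℝ := ∑ i ∈ S, v i ^ 2 with hc
  set w : ι → ι → ℝ := fun k l => ∑ i ∈ S, v i * A i k l with hw
  -- ⟨A_i, w⟩ = 2 v_i c
  have hAw : ∀ i ∈ S, ∑ k ∈ S, ∑ l ∈ S, A i k l * w k l = 2 * (v i * c) := by
    intro i hi
    calc ∑ k ∈ S, ∑ l ∈ S, A i k l * w k l
        = ∑ k ∈ S, ∑ l ∈ S, ∑ j ∈ S, v j * (A i k l * A j k l) := by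
          refine Finset.sum_congr rfl fun k _ => Finset.sum_congr rfl fun l _ => ?_
          rw [hw, Finset.mul_sum]
          exact Finset.sum_congr rfl fun j _ => by ring
      _ = ∑ k ∈ S, ∑ j ∈ S, ∑ l ∈ S, v j * (A i k l * A j k l) :=
          Finset.sum_congr rfl fun k _ => Finset.sum_comm
      _ = ∑ j ∈ S, ∑ k ∈ S, ∑ l ∈ S, v j * (A i k l * A j k l) := Finset.sum_comm
      _ = ∑ j ∈ S, v j * ∑ k ∈ S, ∑ l ∈ S, A i k l * A j k l := by
          refine Finset.sum_congr rfl fun j _ => ?_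
          rw [Finset.mul_sum]
          exact Finset.sum_congr rfl fun k _ => by rw [Finset.mul_sum]
      _ = ∑ j ∈ S, v j * (2 * (v i * v j)) := by
          exact Finset.sum_congr rfl fun j hj => by rw [hE1 i hi j hj]
      _ = ∑ j ∈ S, (2 * v i) * v j ^ 2 := Finset.sum_congr rfl fun j _ => by ring
      _ = 2 * (v i * c) := by rw [← Finset.mul_sum, hc]; ring
  -- ⟨w, w⟩ = 2 c²
  have hww : ∑ k ∈ S, ∑ l ∈ S, w k l * w k l = 2 * c ^ 2 := by
    calc ∑ k ∈ S, ∑ l ∈ S, w k l * w k l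
        = ∑ k ∈ S, ∑ l ∈ S, ∑ j ∈ S, v j * (A j k l * w k l) := by
          refine Finset.sum_congr rfl fun k _ => Finset.sum_congr rfl fun l _ => ?_
          rw [hw, Finset.sum_mul]
          exact Finset.sum_congr rfl fun j _ => by ring
      _ = ∑ k ∈ S, ∑ j ∈ S, ∑ l ∈ S, v j * (A j k l * w k l) :=
          Finset.sum_congr rfl fun k _ => Finset.sum_comm
      _ = ∑ j ∈ S, ∑ k ∈ S, ∑ l ∈ S, v j * (A j k l * w k l) := Finset.sum_comm
      _ = ∑ j ∈ S, v j * ∑ k ∈ S, ∑ l ∈ S, A j k l * w k l := by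
          refine Finset.sum_congr rfl fun j _ => ?_
          rw [Finset.mul_sum]
          exact Finset.sum_congr rfl fun k _ => by rw [Finset.mul_sum]
      _ = ∑ j ∈ S, v j * (2 * (v j * c)) := by
          exact Finset.sum_congr rfl fun j hj => by rw [hAw j hj]
      _ = ∑ j ∈ S, (2 * c) * v j ^ 2 := Finset.sum_congr rfl fun j _ => by ring
      _ = 2 * c ^ 2 := by rw [← Finset.mul_sum, hc]; ring
  -- pointwise: c A_ikl = v_i w_kl
  have hpt : ∀ i ∈ S, ∀ k ∈ S, ∀ l ∈ S, c * A i k l = v i * w k l := by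
    intro i hi
    have hA2 : ∑ k ∈ S, ∑ l ∈ S, A i k l * A i k l = 2 * (v i * v i) := hE1 i hi i hi
    have hDz : ∑ k ∈ S, ∑ l ∈ S, (c * A i k l - v i * w k l) ^ 2 = 0 := by
      have hexp : ∀ k ∈ S, ∀ l ∈ S, (c * A i k l - v i * w k l) ^ 2
          = c ^ 2 * (A i k l * A i k l) - (2 * c * v i) * (A i k l * w k l)
            + v i ^ 2 * (w k l * w k l) := fun k _ l _ => by ring
      calc ∑ k ∈ S, ∑ l ∈ S, (c * A i k l - v i * w k l) ^ 2
          = ∑ k ∈ S, ∑ l ∈ S, (c ^ 2 * (A i k l * A i k l)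
              - (2 * c * v i) * (A i k l * w k l) + v i ^ 2 * (w k l * w k l)) :=
            Finset.sum_congr rfl fun k hk => Finset.sum_congr rfl fun l hl => hexp k hk l hl
        _ = c ^ 2 * (∑ k ∈ S, ∑ l ∈ S, A i k l * A i k l)
              - (2 * c * v i) * (∑ k ∈ S, ∑ l ∈ S, A i k l * w k l)
              + v i ^ 2 * (∑ k ∈ S, ∑ l ∈ S, w k l * w k l) := by
            simp only [Finset.sum_add_distrib, Finset.sum_sub_distrib, Finset.mul_sum]
        _ = 0 := by rw [hA2, hAw i hi, hww]; ring
    intro k hk l hl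
    have h1 : ∀ k ∈ S, (∑ l ∈ S, (c * A i k l - v i * w k l) ^ 2) = 0 := by
      intro k hk
      have := (Finset.sum_eq_zero_iff_of_nonneg (fun k _ =>
        Finset.sum_nonneg fun l _ => sq_nonneg _)).mp hDz k hk
      exact this
    have h2 := (Finset.sum_eq_zero_iff_of_nonneg (fun l _ => sq_nonneg _)).mp (h1 k hk) l hl
    have := pow_eq_zero_iff (n := 2) (by norm_num) |>.mp h2
    linarith
  -- w is antisymmetric
  have hwanti : ∀ k l, w k l = -w l k := by
    intro k l
    rw [hw]
    simp only
    rw [← Finset.sum_neg_distrib]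
    exact Finset.sum_congr rfl fun i _ => by rw [hanti i k l]; ring
  -- c² = ∑ v_i v_k w_ik = 0
  have hcc : c * c = 0 := by
    have h1 : c * c = ∑ i ∈ S, ∑ k ∈ S, (v i * v k) * w i k := by
      calc c * c = ∑ i ∈ S, c * v i ^ 2 := by rw [hc, Finset.mul_sum]
        _ = ∑ i ∈ S, v i * (c * v i) := Finset.sum_congr rfl fun i _ => by ring
        _ = ∑ i ∈ S, v i * (c * ∑ k ∈ S, A k i k) :=
            Finset.sum_congr rfl fun i hi => by rw [hE2 i hi]
        _ = ∑ i ∈ S, ∑ k ∈ S, (v i * v k) * w i k := by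
            refine Finset.sum_congr rfl fun i hi => ?_
            have hstep : c * ∑ k ∈ S, A k i k = ∑ k ∈ S, v k * w i k := by
              rw [Finset.mul_sum]
              exact Finset.sum_congr rfl fun k hk => hpt k hk i hi k hk
            rw [hstep, Finset.mul_sum]
            exact Finset.sum_congr rfl fun k _ => by ring
    have h2 : (∑ i ∈ S, ∑ k ∈ S, (v i * v k) * w i k)
        = -(∑ i ∈ S, ∑ k ∈ S, (v i * v k) * w i k) := by
      nth_rewrite 1 [Finset.sum_comm]
      rw [← Finset.sum_neg_distrib]
      refine Finset.sum_congr rfl fun i _ => ?_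
      rw [← Finset.sum_neg_distrib]
      refine Finset.sum_congr rfl fun k _ => ?_
      rw [hwanti k i]; ring
    have h3 : (∑ i ∈ S, ∑ k ∈ S, (v i * v k) * w i k) = 0 := by linarith
    rw [h1, h3]
  have hc0 : c = 0 := by
    have := mul_self_eq_zero.mp hcc
    exact this
  have hsum0 : ∑ i ∈ S, v i ^ 2 = 0 := by rw [← hc]; exact hc0
  have hv0 : ∀ i ∈ S, v i = 0 := by
    intro i hi
    have h2 := (Finset.sum_eq_zero_iff_of_nonneg (fun j _ => sq_nonneg (v j))).mp hsum0 i hi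
    exact pow_eq_zero_iff (n := 2) (by norm_num) |>.mp h2
  refine ⟨hv0, fun i hi k hk l hl => ?_⟩
  have h := hE1 i hi i hi
  rw [hv0 i hi] at h
  simp only [mul_zero, zero_mul] at h
  have h1 := (Finset.sum_eq_zero_iff_of_nonneg (fun k _ =>
    Finset.sum_nonneg fun l _ => mul_self_nonneg _)).mp h k hk
  have h2 := (Finset.sum_eq_zero_iff_of_nonneg (fun l _ => mul_self_nonneg _)).mp h1 l hl
  exact mul_self_eq_zero.mp h2

end Aux

/-- **Lemma 8** (`lem:nzr`), key step: let `R` be a curvature-like tensor with vanishing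
bivector square `R⁽²⁾ = 0` and vanishing Ricci contraction, and suppose all boost-weight
`+2` components vanish in some null frame: `R_{0i0j} = 0` for all spatial `i, j`.  Then
all boost-weight `+1` components vanish as well: `R_{0i01} = 0` and `R_{0ijk} = 0`;
in particular the boost order of `R` along `ℓ` is at most `0`. -/
theorem bw_one_components_vanish (N : ℕ) (hN : 2 ≤ N)
    (R : Fin N → Fin N → Fin N → Fin N → ℝ) (hcurv : CurvLike R)
    (hsq : ∀ a b c d, bivSq N R a b c d = 0)
    (hric : ∀ a b, ricci N R a b = 0)
    (hbw2 : ∀ i j : Fin N, 2 ≤ (i : ℕ) → 2 ≤ (j : ℕ) →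
      R ⟨0, by omega⟩ i ⟨0, by omega⟩ j = 0) :
    (∀ i : Fin N, 2 ≤ (i : ℕ) →
      R ⟨0, by omega⟩ i ⟨0, by omega⟩ ⟨1, by omega⟩ = 0) ∧
    (∀ i j k : Fin N, 2 ≤ (i : ℕ) → 2 ≤ (j : ℕ) → 2 ≤ (k : ℕ) →
      R ⟨0, by omega⟩ i j k = 0) := by
  obtain ⟨anti, psym⟩ := hcurv
  have anti2 : ∀ a b c d, R a b c d = -R a b d c := fun a b c d => by
    rw [psym a b c d, anti c d a b, psym d c a b]
  have diagcd : ∀ a b c, R a b c c = 0 := fun a b c => by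
    have := anti2 a b c c; linarith
  have z0 : Fin N := ⟨0, by omega⟩
  -- abbreviations
  set Z : Fin N := ⟨0, by omega⟩ with hZ
  set O : Fin N := ⟨1, by omega⟩ with hO
  -- E2 : Ricci trace relation
  have hE2 : ∀ i ∈ Sp N, ∑ k ∈ Sp N, R Z k i k = R Z i Z O := by
    intro i hi
    have h := hric Z i
    rw [ricci_eval hN, sum_split hN, swp_z0 hN, swp_z1 hN] at h
    have h1 : R Z Z i O = 0 := by have := anti Z Z i O; linarith
    have h2 : R Z O i Z = -R Z i Z O := by
      rw [psym Z O i Z, anti i Z Z O]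
    have h3 : ∑ c ∈ Sp N, R Z c i (swp hN c) = ∑ c ∈ Sp N, R Z c i c :=
      Finset.sum_congr rfl fun c hc => by rw [swp_sp hN (mem_Sp.mp hc)]
    rw [h1, h2, h3] at h
    linarith
  -- E1 : bivector-square relation
  have hE1 : ∀ i ∈ Sp N, ∀ j ∈ Sp N,
      ∑ k ∈ Sp N, ∑ l ∈ Sp N, R Z i k l * R Z j k l
        = 2 * (R Z i Z O * R Z j Z O) := by
    intro i hi j hj
    have hi' := mem_Sp.mp hi
    have hj' := mem_Sp.mp hj
    have h := hsq Z i Z j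
    rw [bivSq_eval hN] at h
    rw [sum_split hN (fun e => ∑ f, R Z i e f * R (swp hN e) (swp hN f) Z j)] at h
    rw [sum_split hN (fun f => R Z i Z f * R (swp hN Z) (swp hN f) Z j)] at h
    rw [sum_split hN (fun f => R Z i O f * R (swp hN O) (swp hN f) Z j)] at h
    rw [show (∑ e ∈ Sp N, ∑ f, R Z i e f * R (swp hN e) (swp hN f) Z j)
        = ∑ e ∈ Sp N, (R Z i e Z * R (swp hN e) (swp hN Z) Z j
            + R Z i e O * R (swp hN e) (swp hN O) Z j
            + ∑ f ∈ Sp N, R Z i e f * R (swp hN e) (swp hN f) Z j) from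
      Finset.sum_congr rfl fun e _ => sum_split hN _] at h
    rw [swp_z0 hN, swp_z1 hN] at h
    -- point terms
    have t1 : R Z i Z Z = 0 := diagcd Z i Z
    have t2 : R O Z Z j = -R Z j Z O := by rw [anti O Z Z j, psym Z O Z j]
    have t4 : R Z i O Z = -R Z i Z O := by rw [anti2 Z i O Z]
    have t4b : R Z O Z j = R Z j Z O := psym Z O Z j
    have t5 : R Z i O O = 0 := diagcd Z i O
    -- spatial sums with a 0/1 slot vanish
    have s1 : ∑ f ∈ Sp N, R Z i Z f * R O (swp hN f) Z j = 0 :=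
      Finset.sum_eq_zero fun f hf => by
        rw [hbw2 i f hi' (mem_Sp.mp hf), zero_mul]
    have s2 : ∑ f ∈ Sp N, R Z i O f * R Z (swp hN f) Z j = 0 :=
      Finset.sum_eq_zero fun f hf => by
        rw [swp_sp hN (mem_Sp.mp hf), hbw2 f j (mem_Sp.mp hf) hj', mul_zero]
    have s3 : ∑ e ∈ Sp N, (R Z i e Z * R (swp hN e) O Z j
        + R Z i e O * R (swp hN e) Z Z j
        + ∑ f ∈ Sp N, R Z i e f * R (swp hN e) (swp hN f) Z j)
        = ∑ k ∈ Sp N, ∑ l ∈ Sp N, R Z i k l * R Z j k l := by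
      refine Finset.sum_congr rfl fun e he => ?_
      have he' := mem_Sp.mp he
      rw [swp_sp hN he']
      have u1 : R Z i e Z = 0 := by
        have := anti2 Z i e Z
        rw [hbw2 i e hi' he'] at this
        linarith
      have u2 : R e Z Z j = 0 := by
        have h1 : R e Z Z j = R Z j e Z := psym e Z Z j
        have h2 := anti2 Z j e Z
        rw [hbw2 j e hj' he'] at h2
        linarith
      rw [u1, u2, zero_mul, mul_zero, zero_add, zero_add]
      exact Finset.sum_congr rfl fun f hf => by
        rw [swp_sp hN (mem_Sp.mp hf), psym e f Z j]
    rw [t1, t2, t4, t4b, t5, s1, s2, s3] at h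
    -- h : (1/2) * (0 * _ + R Z i Z O * -(R Z j Z O) + 0 + (-(R Z i Z O) * R Z j Z O + 0 * _ + 0) + ∑∑) = 0
    nlinarith [h]
  -- apply the algebraic lemma
  have key := algebra_key (Sp N) (fun x => R Z x Z O) (fun i k l => R Z i k l)
    (fun i k l => anti2 Z i k l) hE1 hE2
  constructor
  · intro i hi
    exact key.1 i (mem_Sp.mpr hi)
  · intro i j k hi hj hk
    exact key.2 i (mem_Sp.mpr hi) j (mem_Sp.mpr hj) k (mem_Sp.mpr hk)
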